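/- Let M be a positive integer and let A be a finite family of jobs that forms an M-machine schedule. Assign each job of A independently and uniformly at random to one of M machines, and for a machine p let N_p denote the maximum cardinality of a pairwise disjoint subfamily of the jobs assigned to machine p. Then for each fixed machine p, the expected value of N_p is at least |A| / (2M - 1). -/

import Mathlib

/-- A finite family of jobs (intervals `[s, e]`, represented as pairs `(s, e)`)
is pairwise disjoint. -/
def JobsDisjoint (F : Finset (ℝ × ℝ)) : Prop :=
  ∀ j ∈ F, ∀ j' ∈ F, j ≠ j' → Disjoint (Set.Icc j.1 j.2) (Set.Icc j'.1 j'.2)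

/-- A finite family of jobs forms an `M`-machine schedule. -/
def IsMSchedule (M : ℕ) (F : Finset (ℝ × ℝ)) : Prop :=
  ∃ f : ℝ × ℝ → Fin M, ∀ j ∈ F, ∀ j' ∈ F, j ≠ j' → f j = f j' →
    Disjoint (Set.Icc j.1 j.2) (Set.Icc j'.1 j'.2)

open scoped Classical in
/-- The maximum cardinality of a pairwise disjoint subfamily of `F`. -/
noncomputable def maxIS (F : Finset (ℝ × ℝ)) : ℕ :=
  (F.powerset.filter JobsDisjoint).sup Finset.card

namespace Stmt8Aux

variable {M : ℕ} {A : Finset (ℝ × ℝ)}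

/-- sort key: lexicographic on (right endpoint, left endpoint). -/
def key (a : ↥A) : ℝ ×ₗ ℝ := toLex (a.1.2, a.1.1)

lemma key_inj : Function.Injective (key (A := A)) := by
  intro a b h
  have h1 : ((a.1.2, a.1.1) : ℝ × ℝ) = (b.1.2, b.1.1) := congrArg ofLex h
  have h2 := Prod.mk.injEq .. ▸ h1
  exact Subtype.ext (Prod.ext h2.2 h2.1)

/-- the interval of a job -/
def I (a : ↥A) : Set ℝ := Set.Icc a.1.1 a.1.2

open scoped Classical in
/-- greedy algorithm with accumulator -/
noncomputable def gAux (g : ↥A → Fin M) (p : Fin M) : List ↥A → List ↥A → List ↥A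
  | [], acc => acc
  | a :: l, acc =>
      gAux g p l (if g a = p ∧ ∀ b ∈ acc, Disjoint (I a) (I b) then a :: acc else acc)

lemma sub_gAux (g : ↥A → Fin M) (p : Fin M) (l : List ↥A) :
    ∀ acc x, x ∈ acc → x ∈ gAux g p l acc := by
  induction l with
  | nil => intro acc x hx; simpa [gAux] using hx
  | cons a l ih =>
    intro acc x hx
    rw [gAux]
    apply ih
    split <;> simp [hx]

lemma mem_gAux (g : ↥A → Fin M) (p : Fin M) (l : List ↥A) :
    ∀ acc x, x ∈ gAux g p l acc → x ∈ l ∨ x ∈ acc := by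
  induction l with
  | nil => intro acc x hx; exact Or.inr (by simpa [gAux] using hx)
  | cons a l ih =>
    intro acc x hx
    rw [gAux] at hx
    rcases ih _ x hx with h | h
    · exact Or.inl (List.mem_cons_of_mem _ h)
    · split at h
      · rcases List.mem_cons.1 h with h | h
        · exact Or.inl (h ▸ List.mem_cons_self (a := a) (l := l))
        · exact Or.inr h
      · exact Or.inr h

lemma mem_gAux_iff (g : ↥A → Fin M) (p : Fin M) (l : List ↥A) (acc : List ↥A)
    (x : ↥A) (hx : x ∉ l) : x ∈ gAux g p l acc ↔ x ∈ acc :=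
  ⟨fun h => ((mem_gAux g p l acc x h).resolve_left hx), sub_gAux g p l acc x⟩

lemma gAux_append (g : ↥A → Fin M) (p : Fin M) (l₁ l₂ : List ↥A) :
    ∀ acc, gAux g p (l₁ ++ l₂) acc = gAux g p l₂ (gAux g p l₁ acc) := by
  induction l₁ with
  | nil => intro acc; simp [gAux]
  | cons a l ih => intro acc; rw [List.cons_append, gAux, gAux, ih]

lemma gAux_congr (g g' : ↥A → Fin M) (p : Fin M) (l : List ↥A)
    (h : ∀ x ∈ l, g x = g' x) : ∀ acc, gAux g p l acc = gAux g' p l acc := by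
  induction l with
  | nil => intro acc; simp [gAux]
  | cons a l ih =>
    intro acc
    rw [gAux, gAux]
    have ha : g a = g' a := h a (List.mem_cons_self (a := a) (l := l))
    rw [ha, ih (fun x hx => h x (List.mem_cons_of_mem _ hx))]


lemma gAux_p (g : ↥A → Fin M) (p : Fin M) (l : List ↥A) :
    ∀ acc, (∀ x ∈ acc, g x = p) → ∀ x ∈ gAux g p l acc, g x = p := by
  induction l with
  | nil => intro acc hacc x hx; exact hacc x (by simpa [gAux] using hx)
  | cons a l ih =>
    intro acc hacc x hx
    rw [gAux] at hx
    refine ih _ ?_ x hx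
    split
    · rename_i hcond
      intro y hy
      rcases List.mem_cons.1 hy with h | h
      · exact h ▸ hcond.1
      · exact hacc y h
    · exact hacc

lemma gAux_disj (g : ↥A → Fin M) (p : Fin M) (l : List ↥A) :
    ∀ acc, (∀ x ∈ acc, ∀ y ∈ acc, x ≠ y → Disjoint (I x) (I y)) →
      ∀ x ∈ gAux g p l acc, ∀ y ∈ gAux g p l acc, x ≠ y → Disjoint (I x) (I y) := by
  induction l with
  | nil => intro acc hacc; simpa [gAux] using hacc
  | cons a l ih =>
    intro acc hacc
    rw [gAux]
    refine ih _ ?_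
    split
    · rename_i hcond
      intro x hx y hy hxy
      rcases List.mem_cons.1 hx with hxa | hx2
      · rcases List.mem_cons.1 hy with hya | hy2
        · exact absurd (hxa.trans hya.symm) hxy
        · subst hxa; exact hcond.2 y hy2
      · rcases List.mem_cons.1 hy with hya | hy2
        · subst hya; exact (hcond.2 x hx2).symm
        · exact hacc x hx2 y hy2 hxy
    · exact hacc

/-- elements dropped by dropWhile in a sorted list fail the (downward-closed) predicate -/
lemma dropWhile_not {r : ↥A → ↥A → Prop} {P : ↥A → Bool}
    (hPr : ∀ x y, r x y → P x = false → P y = false) :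
    ∀ l : List ↥A, l.Pairwise r → ∀ x ∈ l.dropWhile P, P x = false := by
  intro l
  induction l with
  | nil => intro _ x hx; simp at hx
  | cons a l ih =>
    intro hl x hx
    rw [List.dropWhile_cons] at hx
    rcases List.pairwise_cons.1 hl with ⟨ha, hl'⟩
    by_cases hP : P a = true
    · rw [if_pos hP] at hx
      exact ih hl' x hx
    · rw [if_neg hP] at hx
      have hPa : P a = false := by simpa using hP
      rcases List.mem_cons.1 hx with rfl | hx
      · exact hPa
      · exact hPr a x (ha x hx) hPa

open scoped Classical in
/-- membership of `b` in greedy result only depends on `g` at jobs with key ≤ key b,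
provided `l` is sorted. -/
lemma gAux_indep (g : ↥A → Fin M) (p : Fin M) (b : ↥A) (l : List ↥A)
    (hl : l.Pairwise (fun x y => key x ≤ key y)) (a : ↥A) (hba : key b < key a) (v : Fin M) :
    (b ∈ gAux (Function.update g a v) p l [] ↔ b ∈ gAux g p l []) := by
  set P : ↥A → Bool := fun x => decide (key x ≤ key b) with hP
  have hsplit : l = l.takeWhile P ++ l.dropWhile P := (List.takeWhile_append_dropWhile ..).symm
  have hmemtake : ∀ x ∈ l.takeWhile P, key x ≤ key b := by
    intro x hx
    have := List.mem_takeWhile_imp hx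
    simpa [hP] using this
  have hbdrop : b ∉ l.dropWhile P := by
    intro hmem
    have := dropWhile_not (r := fun x y => key x ≤ key y)
      (by intro x y hxy hx; simp only [hP, decide_eq_false_iff_not, not_le] at hx ⊢
          exact lt_of_lt_of_le hx hxy) l hl b hmem
    simp [hP] at this
  have hatake : a ∉ l.takeWhile P := fun h => absurd (hmemtake a h) (not_le.2 hba)
  have hagree : ∀ x ∈ l.takeWhile P, Function.update g a v x = g x := by
    intro x hx
    exact Function.update_of_ne (fun h => hatake (by subst h; exact hx)) _ _
  conv_lhs => rw [hsplit]
  conv_rhs => rw [hsplit]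
  rw [gAux_append, gAux_append,
    mem_gAux_iff _ _ _ _ _ hbdrop, mem_gAux_iff _ _ _ _ _ hbdrop,
    gAux_congr _ g p _ hagree]

/-- rejection lemma: a job assigned to `p` but not in the greedy set overlaps an
earlier greedy job. -/
lemma gAux_rej (g : ↥A → Fin M) (p : Fin M) (a : ↥A) (hp : g a = p) :
    ∀ l : List ↥A, l.Pairwise (fun x y => key x ≤ key y) → l.Nodup → a ∈ l →
      ∀ acc, (∀ x ∈ acc, key x < key a) →
      a ∈ gAux g p l acc ∨
        ∃ b ∈ gAux g p l acc, key b < key a ∧ ¬ Disjoint (I a) (I b) := by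
  intro l
  induction l with
  | nil => intro _ _ ha; exact absurd ha List.not_mem_nil
  | cons c l ih =>
    intro hsort hnodup ha acc hacc
    rcases List.mem_cons.1 ha with rfl | ha
    · -- a is processed now
      rw [gAux]
      by_cases hcond : g a = p ∧ ∀ b ∈ acc, Disjoint (I a) (I b)
      · rw [if_pos hcond]
        exact Or.inl (sub_gAux _ _ _ _ _ (List.mem_cons_self (a := a) (l := acc)))
      · rw [if_neg hcond]
        push_neg at hcond
        obtain ⟨b, hb, hbd⟩ := hcond hp
        exact Or.inr ⟨b, sub_gAux _ _ _ _ _ hb, hacc b hb, hbd⟩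
    · -- a is later
      rw [gAux]
      have hca : key c < key a := by
        have hle : key c ≤ key a := (List.pairwise_cons.1 hsort).1 a ha
        have hne : c ≠ a := fun h => (List.nodup_cons.1 hnodup).1 (h ▸ ha)
        exact lt_of_le_of_ne hle (fun h => hne (key_inj h))
      refine ih (List.pairwise_cons.1 hsort).2 (List.nodup_cons.1 hnodup).2 ha _ ?_
      split
      · intro x hx
        rcases List.mem_cons.1 hx with rfl | hx
        · exact hca
        · exact hacc x hx
      · exact hacc


open scoped Classical in
/-- the jobs of `A`, sorted by key -/
noncomputable def slist (A : Finset (ℝ × ℝ)) : List ↥A :=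
  List.insertionSort (fun x y => key x ≤ key y) A.attach.toList

lemma slist_sorted (A : Finset (ℝ × ℝ)) :
    (slist A).Pairwise (fun x y => key x ≤ key y) := by
  classical
  haveI : IsTotal ↥A (fun x y => key x ≤ key y) := ⟨fun a b => le_total _ _⟩
  haveI : IsTrans ↥A (fun x y => key x ≤ key y) := ⟨fun a b c => le_trans⟩
  exact List.pairwise_insertionSort _ _

lemma slist_perm (A : Finset (ℝ × ℝ)) : List.Perm (slist A) A.attach.toList :=
  List.perm_insertionSort _ _

lemma slist_nodup (A : Finset (ℝ × ℝ)) : (slist A).Nodup :=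
  ((slist_perm A).nodup_iff).2 A.attach.nodup_toList

lemma mem_slist {A : Finset (ℝ × ℝ)} (x : ↥A) : x ∈ slist A :=
  ((slist_perm A).mem_iff).2 (by simp [Finset.mem_toList])

/-- the greedy independent set for assignment `g` and machine `p` -/
noncomputable def Gr (g : ↥A → Fin M) (p : Fin M) : Finset ↥A :=
  (gAux g p (slist A) []).toFinset

lemma Gr_p {g : ↥A → Fin M} {p : Fin M} {x : ↥A} (hx : x ∈ Gr g p) : g x = p :=
  gAux_p g p (slist A) [] (by simp) x (List.mem_toFinset.1 hx)

lemma Gr_disj {g : ↥A → Fin M} {p : Fin M} {x y : ↥A} (hx : x ∈ Gr g p)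
    (hy : y ∈ Gr g p) (hxy : x ≠ y) : Disjoint (I x) (I y) :=
  gAux_disj g p (slist A) [] (by simp) x (List.mem_toFinset.1 hx) y (List.mem_toFinset.1 hy) hxy

lemma Gr_indep {g : ↥A → Fin M} {p : Fin M} {b a : ↥A} (hba : key b < key a) (v : Fin M) :
    b ∈ Gr (Function.update g a v) p ↔ b ∈ Gr g p := by
  rw [Gr, Gr, List.mem_toFinset, List.mem_toFinset]
  exact gAux_indep g p b (slist A) (slist_sorted A) a hba v

lemma Gr_rej {g : ↥A → Fin M} {p : Fin M} {a : ↥A} (hp : g a = p) (ha : a ∉ Gr g p) :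
    ∃ b ∈ Gr g p, key b < key a ∧ ¬ Disjoint (I a) (I b) := by
  have := gAux_rej g p a hp (slist A) (slist_sorted A) (slist_nodup A) (mem_slist a) []
    (by simp)
  rcases this with h | ⟨b, hb, h1, h2⟩
  · exact absurd (List.mem_toFinset.2 h) ha
  · exact ⟨b, List.mem_toFinset.2 hb, h1, h2⟩

open scoped Classical in
/-- potential blockers of `a`: jobs after `b` whose interval contains the right endpoint
of `b` -/
noncomputable def Cset (b : ↥A) : Finset ↥A :=
  A.attach.filter (fun a => key b < key a ∧ b.1.2 ∈ Set.Icc a.1.1 a.1.2)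

lemma card_Cset {f : ℝ × ℝ → Fin M} (hjobs : ∀ j ∈ A, j.1 < j.2)
    (hf : ∀ j ∈ A, ∀ j' ∈ A, j ≠ j' → f j = f j' →
      Disjoint (Set.Icc j.1 j.2) (Set.Icc j'.1 j'.2)) (b : ↥A) :
    (Cset b).card ≤ M - 1 := by
  classical
  set D : Finset ↥A := A.attach.filter (fun a => b.1.2 ∈ Set.Icc a.1.1 a.1.2) with hD
  have hsub : Cset b ⊆ D.erase b := by
    intro a ha
    rw [Cset, Finset.mem_filter] at ha
    refine Finset.mem_erase.2 ⟨fun h => absurd (h ▸ ha.2.1) (lt_irrefl _), ?_⟩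
    exact Finset.mem_filter.2 ⟨ha.1, ha.2.2⟩
  have hbD : b ∈ D := Finset.mem_filter.2 ⟨Finset.mem_attach _ _,
    ⟨le_of_lt (hjobs b.1 b.2), le_refl _⟩⟩
  have hDcard : D.card ≤ M := by
    have hinj : Set.InjOn (fun a : ↥A => f a.1) D := by
      intro x hx y hy hxy
      by_contra hne
      have hvne : x.1 ≠ y.1 := fun h => hne (Subtype.ext h)
      have hdisj := hf x.1 x.2 y.1 y.2 hvne hxy
      rw [hD, Finset.mem_coe, Finset.mem_filter] at hx hy
      exact (Set.disjoint_left.1 hdisj hx.2) hy.2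
    calc D.card ≤ (Finset.univ : Finset (Fin M)).card :=
          Finset.card_le_card_of_injOn _ (fun _ _ => Finset.mem_univ _) hinj
      _ = M := by simp
  calc (Cset b).card ≤ (D.erase b).card := Finset.card_le_card hsub
    _ = D.card - 1 := Finset.card_erase_of_mem hbD
    _ ≤ M - 1 := Nat.sub_le_sub_right hDcard 1

lemma maxIS_ge {F S : Finset (ℝ × ℝ)} (hS : S ⊆ F) (hd : JobsDisjoint S) :
    S.card ≤ maxIS F := by
  classical
  refine Finset.le_sup (f := Finset.card) ?_
  rw [Finset.mem_filter, Finset.mem_powerset]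
  exact ⟨hS, hd⟩


/-- counting slice lemma: if `Q` does not depend on the value of `g` at `a`, then the
number of `g` with `Q g` and `g a = p` is `1/M` of the number of `g` with `Q g`. -/
lemma slice (Q : (↥A → Fin M) → Prop) [DecidablePred Q] (a : ↥A)
    (hQ : ∀ g v, Q (Function.update g a v) ↔ Q g) (p : Fin M) :
    M * (Finset.univ.filter (fun g : ↥A → Fin M => Q g ∧ g a = p)).card
      = (Finset.univ.filter (fun g : ↥A → Fin M => Q g)).card := by
  classical
  have h1 : (Finset.univ.filter (fun g : ↥A → Fin M => Q g)).card
      = ∑ v : Fin M, (Finset.univ.filter (fun g : ↥A → Fin M => Q g ∧ g a = v)).card := by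
    rw [Finset.card_eq_sum_card_fiberwise
      (f := fun g : ↥A → Fin M => g a) (t := Finset.univ) (fun _ _ => Finset.mem_univ _)]
    congr 1
    funext v
    rw [Finset.filter_filter]
  have h2 : ∀ v : Fin M, (Finset.univ.filter (fun g : ↥A → Fin M => Q g ∧ g a = v)).card
      = (Finset.univ.filter (fun g : ↥A → Fin M => Q g ∧ g a = p)).card := by
    intro v
    apply Finset.card_bij' (i := fun g _ => Function.update g a p)
      (j := fun h _ => Function.update h a v)
    · intro g hg
      simp only [Finset.mem_filter, Finset.mem_univ, true_and] at hg
      rw [Function.update_idem, ← hg.2, Function.update_eq_self]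
    · intro h hh
      simp only [Finset.mem_filter, Finset.mem_univ, true_and] at hh
      rw [Function.update_idem, ← hh.2, Function.update_eq_self]
    · intro g hg
      simp only [Finset.mem_filter, Finset.mem_univ, true_and] at hg ⊢
      exact ⟨(hQ g p).2 hg.1, Function.update_self _ _ _⟩
    · intro h hh
      simp only [Finset.mem_filter, Finset.mem_univ, true_and] at hh ⊢
      exact ⟨(hQ h v).2 hh.1, Function.update_self _ _ _⟩
  rw [h1]
  rw [Finset.sum_congr rfl (fun v _ => h2 v), Finset.sum_const, Finset.card_univ,
    Fintype.card_fin, smul_eq_mul]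


lemma key_lt_iff {a b : ↥A} :
    key a < key b ↔ a.1.2 < b.1.2 ∨ (a.1.2 = b.1.2 ∧ a.1.1 < b.1.1) :=
  Prod.Lex.lt_iff

lemma endpoint_mem {a b : ↥A} (hab : key b < key a) (h : ¬ Disjoint (I a) (I b)) :
    b.1.2 ∈ Set.Icc a.1.1 a.1.2 := by
  obtain ⟨t, hta, htb⟩ := Set.not_disjoint_iff.1 h
  rw [I, Set.mem_Icc] at hta htb
  rcases key_lt_iff.1 hab with h1 | ⟨h1, _⟩
  · exact ⟨le_trans hta.1 htb.2, le_of_lt h1⟩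
  · exact ⟨le_trans hta.1 htb.2, le_of_eq h1⟩

open Finset in
lemma factB (p : Fin M) :
    M * ∑ g : ↥A → Fin M, (A.attach.filter (fun j => g j = p)).card
      = A.card * M ^ A.card := by
  classical
  have hcard : ∀ j : ↥A,
      M * (Finset.univ.filter (fun g : ↥A → Fin M => g j = p)).card = M ^ A.card := by
    intro j
    have h := slice (Q := fun _ : ↥A → Fin M => True) j (by simp) p
    simp only [true_and, Finset.filter_true] at h
    rw [h, Finset.card_univ, Fintype.card_fun, Fintype.card_fin, Fintype.card_coe]
  have h1 : ∑ g : ↥A → Fin M, (A.attach.filter (fun j => g j = p)).card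
      = ∑ j ∈ A.attach, (Finset.univ.filter (fun g : ↥A → Fin M => g j = p)).card := by
    simp only [Finset.card_filter]
    exact Finset.sum_comm
  rw [h1, Finset.mul_sum, Finset.sum_congr rfl (fun j _ => hcard j), Finset.sum_const,
    Finset.card_attach, smul_eq_mul]

lemma factC (g : ↥A → Fin M) (p : Fin M) :
    (A.attach.filter (fun j => g j = p)).card ≤ (Gr g p).card +
      ∑ b ∈ Gr g p, (Cset b ∩ A.attach.filter (fun j => g j = p)).card := by
  classical
  set S := A.attach.filter (fun j => g j = p) with hS
  have hsub : S ⊆ Gr g p ∪ (Gr g p).biUnion (fun b => Cset b ∩ S) := by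
    intro a ha
    by_cases hag : a ∈ Gr g p
    · exact Finset.mem_union_left _ hag
    · have hga : g a = p := (Finset.mem_filter.1 ha).2
      obtain ⟨b, hb, hba, hnd⟩ := Gr_rej hga hag
      refine Finset.mem_union_right _ (Finset.mem_biUnion.2
        ⟨b, hb, Finset.mem_inter.2 ⟨?_, ha⟩⟩)
      rw [Cset, Finset.mem_filter]
      exact ⟨Finset.mem_attach _ _, hba, endpoint_mem hba hnd⟩
  calc S.card ≤ (Gr g p ∪ (Gr g p).biUnion (fun b => Cset b ∩ S)).card :=
        Finset.card_le_card hsub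
    _ ≤ (Gr g p).card + ((Gr g p).biUnion (fun b => Cset b ∩ S)).card :=
        Finset.card_union_le _ _
    _ ≤ (Gr g p).card + ∑ b ∈ Gr g p, (Cset b ∩ S).card :=
        Nat.add_le_add_left (Finset.card_biUnion_le) _

lemma factD {f : ℝ × ℝ → Fin M} (hjobs : ∀ j ∈ A, j.1 < j.2)
    (hf : ∀ j ∈ A, ∀ j' ∈ A, j ≠ j' → f j = f j' →
      Disjoint (Set.Icc j.1 j.2) (Set.Icc j'.1 j'.2)) (p : Fin M) :
    M * ∑ g : ↥A → Fin M, ∑ b ∈ Gr g p, (Cset b ∩ A.attach.filter (fun j => g j = p)).card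
      ≤ (M - 1) * ∑ g : ↥A → Fin M, (Gr g p).card := by
  classical
  have hGrsub : ∀ (g : ↥A → Fin M), A.attach ∩ Gr g p = Gr g p :=
    fun g => Finset.inter_eq_right.2 (fun x _ => Finset.mem_attach _ _)
  have hrw1 : ∀ g : ↥A → Fin M,
      ∑ b ∈ Gr g p, (Cset b ∩ A.attach.filter (fun j => g j = p)).card
      = ∑ b ∈ A.attach,
          if b ∈ Gr g p then (Cset b ∩ A.attach.filter (fun j => g j = p)).card else 0 := by
    intro g
    rw [Finset.sum_ite_mem, hGrsub g]
  have hrw2 : ∀ (g : ↥A → Fin M) (b : ↥A),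
      (if b ∈ Gr g p then (Cset b ∩ A.attach.filter (fun j => g j = p)).card else 0)
      = ∑ a ∈ Cset b, if b ∈ Gr g p ∧ g a = p then 1 else 0 := by
    intro g b
    by_cases hb : b ∈ Gr g p
    · rw [if_pos hb]
      have hint : Cset b ∩ A.attach.filter (fun j => g j = p)
          = (Cset b).filter (fun a => g a = p) := by
        ext a
        simp only [Finset.mem_inter, Finset.mem_filter, Finset.mem_attach, true_and]
      rw [hint, Finset.card_filter]
      exact Finset.sum_congr rfl (fun a _ => by simp [hb])
    · rw [if_neg hb]
      simp [hb]
  have hslice : ∀ b : ↥A, ∀ a ∈ Cset b,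
      M * (Finset.univ.filter (fun g : ↥A → Fin M => b ∈ Gr g p ∧ g a = p)).card
      = (Finset.univ.filter (fun g : ↥A → Fin M => b ∈ Gr g p)).card := by
    intro b a ha
    have hba : key b < key a := by
      rw [Cset, Finset.mem_filter] at ha
      exact ha.2.1
    exact slice (Q := fun g : ↥A → Fin M => b ∈ Gr g p) a
      (fun g v => Gr_indep hba v) p
  have hchain : M * ∑ g : ↥A → Fin M,
      ∑ b ∈ Gr g p, (Cset b ∩ A.attach.filter (fun j => g j = p)).card
      = ∑ b ∈ A.attach, ∑ a ∈ Cset b,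
          (Finset.univ.filter (fun g : ↥A → Fin M => b ∈ Gr g p)).card := by
    rw [Finset.sum_congr rfl (fun g _ => hrw1 g), Finset.sum_comm]
    rw [Finset.sum_congr rfl (fun b _ => Finset.sum_congr rfl (fun g _ => hrw2 g b))]
    rw [Finset.sum_congr rfl (fun b _ => Finset.sum_comm)]
    rw [Finset.mul_sum]
    refine Finset.sum_congr rfl (fun b _ => ?_)
    rw [Finset.mul_sum]
    refine Finset.sum_congr rfl (fun a ha => ?_)
    rw [← hslice b a ha, Finset.card_filter]
  have hQb : ∑ b ∈ A.attach,
      (Finset.univ.filter (fun g : ↥A → Fin M => b ∈ Gr g p)).card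
      = ∑ g : ↥A → Fin M, (Gr g p).card := by
    simp only [Finset.card_filter]
    rw [Finset.sum_comm]
    refine Finset.sum_congr rfl (fun g _ => ?_)
    rw [Finset.sum_ite_mem, hGrsub g, Finset.sum_const, smul_eq_mul, mul_one]
  rw [hchain]
  calc ∑ b ∈ A.attach, ∑ a ∈ Cset b,
        (Finset.univ.filter (fun g : ↥A → Fin M => b ∈ Gr g p)).card
      = ∑ b ∈ A.attach, (Cset b).card *
        (Finset.univ.filter (fun g : ↥A → Fin M => b ∈ Gr g p)).card := by
        exact Finset.sum_congr rfl (fun b _ => by rw [Finset.sum_const, smul_eq_mul])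
    _ ≤ ∑ b ∈ A.attach, (M - 1) *
        (Finset.univ.filter (fun g : ↥A → Fin M => b ∈ Gr g p)).card :=
        Finset.sum_le_sum (fun b _ =>
          Nat.mul_le_mul_right _ (card_Cset hjobs hf b))
    _ = (M - 1) * ∑ g : ↥A → Fin M, (Gr g p).card := by
        rw [← Finset.mul_sum, hQb]


end Stmt8Aux

/-- if the finite family `A` forms an `M`-machine schedule and each job of `A`
is assigned independently and uniformly at random to one of the `M` machines, then for
each fixed machine `p` the expected maximum cardinality of a pairwise disjoint subfamily
of the jobs assigned to `p` is at least `|A| / (2M - 1)`. -/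
theorem stmt8 (M : ℕ) (hM : 0 < M) (A : Finset (ℝ × ℝ))
    (hjobs : ∀ j ∈ A, j.1 < j.2)
    (hsched : IsMSchedule M A) (p : Fin M) :
    (A.card : ℝ) / (2 * (M : ℝ) - 1) ≤
      (∑ g : (↥A → Fin M),
        (maxIS ((A.attach.filter (fun j => g j = p)).image Subtype.val) : ℝ)) /
        (M : ℝ) ^ A.card := by
  obtain ⟨f, hf⟩ := hsched
  have hM1 : (1 : ℝ) ≤ (M : ℝ) := by exact_mod_cast hM
  have hden : (0 : ℝ) < 2 * (M : ℝ) - 1 := by linarith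
  have hpow : (0 : ℝ) < (M : ℝ) ^ A.card := by positivity
  rw [div_le_div_iff₀ hden hpow]
  set T : ℕ := ∑ g : ↥A → Fin M, (Stmt8Aux.Gr g p).card with hT
  -- Fact A : T is at most the sum of the maxIS values
  have factA : (T : ℝ) ≤ ∑ g : ↥A → Fin M,
      (maxIS ((A.attach.filter (fun j => g j = p)).image Subtype.val) : ℝ) := by
    rw [hT]
    push_cast
    apply Finset.sum_le_sum
    intro g _
    have hsub : (Stmt8Aux.Gr g p).image Subtype.val ⊆
        (A.attach.filter (fun j => g j = p)).image Subtype.val := by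
      apply Finset.image_subset_image
      intro x hx
      exact Finset.mem_filter.2 ⟨Finset.mem_attach _ _, Stmt8Aux.Gr_p hx⟩
    have hdisj : JobsDisjoint ((Stmt8Aux.Gr g p).image Subtype.val) := by
      intro j hj j' hj' hne
      obtain ⟨x, hx, rfl⟩ := Finset.mem_image.1 hj
      obtain ⟨y, hy, rfl⟩ := Finset.mem_image.1 hj'
      exact Stmt8Aux.Gr_disj hx hy (fun h => hne (congrArg Subtype.val h))
    have h1 := Stmt8Aux.maxIS_ge hsub hdisj
    rw [Finset.card_image_of_injective _ Subtype.val_injective] at h1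
    exact_mod_cast h1
  -- main counting inequality in ℕ
  have hmain : A.card * M ^ A.card ≤ (M + (M - 1)) * T := by
    calc A.card * M ^ A.card
        = M * ∑ g : ↥A → Fin M, (A.attach.filter (fun j => g j = p)).card :=
          (Stmt8Aux.factB p).symm
      _ ≤ M * ∑ g : ↥A → Fin M, ((Stmt8Aux.Gr g p).card +
            ∑ b ∈ Stmt8Aux.Gr g p,
              (Stmt8Aux.Cset b ∩ A.attach.filter (fun j => g j = p)).card) :=
          Nat.mul_le_mul_left _ (Finset.sum_le_sum (fun g _ => Stmt8Aux.factC g p))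
      _ = M * T + M * ∑ g : ↥A → Fin M, ∑ b ∈ Stmt8Aux.Gr g p,
            (Stmt8Aux.Cset b ∩ A.attach.filter (fun j => g j = p)).card := by
          rw [Finset.sum_add_distrib, Nat.mul_add, hT]
      _ ≤ M * T + (M - 1) * T :=
          Nat.add_le_add_left (Stmt8Aux.factD hjobs hf p) _
      _ = (M + (M - 1)) * T := by rw [Nat.add_mul]
  have h2M : ((M + (M - 1) : ℕ) : ℝ) = 2 * (M : ℝ) - 1 := by
    have h1M : 1 ≤ M := hM
    push_cast [Nat.cast_sub h1M]
    ring
  calc (A.card : ℝ) * (M : ℝ) ^ A.card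
      = ((A.card * M ^ A.card : ℕ) : ℝ) := by push_cast; ring
    _ ≤ (((M + (M - 1)) * T : ℕ) : ℝ) := by exact_mod_cast hmain
    _ = (2 * (M : ℝ) - 1) * (T : ℝ) := by rw [Nat.cast_mul, h2M]
    _ ≤ (2 * (M : ℝ) - 1) * (∑ g : ↥A → Fin M,
          (maxIS ((A.attach.filter (fun j => g j = p)).image Subtype.val) : ℝ)) :=
        mul_le_mul_of_nonneg_left factA (le_of_lt hden)
    _ = (∑ g : ↥A → Fin M,
          (maxIS ((A.attach.filter (fun j => g j = p)).image Subtype.val) : ℝ)) *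
          (2 * (M : ℝ) - 1) := mul_comm _ _
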